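/- arXiv:2401.11955 — 3 statements merged into one kernel-verified Lean document; each statement's English description precedes it below -/
import Mathlib

section
/- Let s_n denote the n-th order Taylor polynomial at 0 of the function z ↦ (1+z)^{-n}. Then for every z ∈ ℂ with z ≠ -1, we have (1+z)^{-n} - s_n(z) = (-1)^{n+1} n ((2n)!/(n!)²) ∫_γ (z-t)^n / (1+t)^{2n+1} dt, where γ is any path from 0 to z avoiding -1. -/
open Complex

lemma key_sum (n : ℕ) (hn : 1 ≤ n) (z w v : ℂ) (hw : 1 + w ≠ 0) :
    ∑ k ∈ Finset.range (n+1),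
      ((-1:ℂ)^k * (Nat.choose (n + k - 1) k) *
        ((((-((n:ℤ)+(k:ℕ))) : ℤ) : ℂ) * (1+w)^((-((n:ℤ)+(k:ℕ))) - 1) * v * (z-w)^k
          + (1+w)^(-((n:ℤ)+(k:ℕ))) * (((k:ℕ):ℂ) * (z-w)^(k-1) * (-v))))
    = (-1:ℂ)^(n+1) * (n:ℂ) * ((Nat.factorial (2*n) : ℂ) / ((Nat.factorial n : ℂ))^2) *
        ((z - w)^n / (1+w)^(2*n+1) * v) := by
  have hfac : ∀ m : ℕ, ((Nat.factorial m : ℂ)) ≠ 0 :=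
    fun m => Nat.cast_ne_zero.mpr (Nat.factorial_ne_zero m)
  have hne : (1+w)^(2*n+1) ≠ 0 := pow_ne_zero _ hw
  set F : ℕ → ℂ := fun j => (-1:ℂ)^j *
      ((Nat.factorial (n+j) : ℂ) / ((Nat.factorial j : ℂ) * (Nat.factorial (n-1) : ℂ))) *
      ((1+w)^(n-j) * (z-w)^j * v / (1+w)^(2*n+1)) with hF
  have hzp : ∀ m : ℕ, (1+w)^((m:ℤ) - ((2*n+1:ℕ) : ℤ)) = (1+w)^m / (1+w)^(2*n+1) := by
    intro m
    rw [zpow_sub₀ hw, zpow_natCast, zpow_natCast]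
  have step : ∀ j ∈ Finset.range n,
      ((-1:ℂ)^(j+1) * (Nat.choose (n + (j+1) - 1) (j+1)) *
        ((((-((n:ℤ)+((j+1:ℕ):ℤ))) : ℤ) : ℂ) * (1+w)^((-((n:ℤ)+((j+1:ℕ):ℤ))) - 1) * v * (z-w)^(j+1)
          + (1+w)^(-((n:ℤ)+((j+1:ℕ):ℤ))) * ((((j+1:ℕ)):ℂ) * (z-w)^((j+1)-1) * (-v))))
      = F j - F (j+1) := by
    intro j hj
    have hjn : j + 1 ≤ n := Finset.mem_range.mp hj
    have ccoef : (((-((n:ℤ)+((j+1:ℕ):ℤ))) : ℤ) : ℂ) = -((n:ℂ)+((j:ℂ)+1)) := by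
      push_cast; ring
    have hj1c : (((j+1:ℕ)):ℂ) = (j:ℂ)+1 := by push_cast; ring
    rw [ccoef, hj1c]
    have e1 : (-((n:ℤ)+((j+1:ℕ):ℤ))) - 1 = ((n-1-j : ℕ) : ℤ) - ((2*n+1 : ℕ) : ℤ) := by
      push_cast [Nat.cast_sub (by omega : 1 + j ≤ n)]; omega
    have e2 : (-((n:ℤ)+((j+1:ℕ):ℤ))) = ((n-j : ℕ) : ℤ) - ((2*n+1 : ℕ) : ℤ) := by
      push_cast [Nat.cast_sub (by omega : j ≤ n)]; omega
    have hch : (Nat.choose (n + (j+1) - 1) (j+1) : ℂ)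
        = (Nat.factorial (n+j) : ℂ) / ((Nat.factorial (j+1) : ℂ) * (Nat.factorial (n-1) : ℂ)) := by
      have h1 : n + (j+1) - 1 = n + j := by omega
      have h2 : (n + j) - (j + 1) = n - 1 := by omega
      rw [h1, Nat.cast_choose ℂ (by omega), h2]
    have hf1 : (Nat.factorial (n+(j+1)) : ℂ) = ((n:ℂ)+((j:ℂ)+1)) * (Nat.factorial (n+j) : ℂ) := by
      have : n + (j+1) = (n+j) + 1 := by omega
      rw [this, Nat.factorial_succ]; push_cast; ring
    have hf2 : (Nat.factorial (j+1) : ℂ) = ((j:ℂ)+1) * (Nat.factorial j : ℂ) := by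
      rw [Nat.factorial_succ]; push_cast; ring
    have hp1 : (1+w)^(n-j) = (1+w)^(n-1-j) * (1+w) := by
      rw [← pow_succ]; congr 1; omega
    have hp2 : n - (j+1) = n - 1 - j := by omega
    rw [e1, e2, hzp, hzp, hch]
    have hzw : (z-w)^(j+1) = (z-w)^j * (z-w) := pow_succ _ _
    simp only [hF, hp2, hf1, hf2, hp1, hzw, Nat.add_sub_cancel]
    have hP : ((Nat.factorial j : ℂ)) ≠ 0 := hfac j
    have hQ : ((Nat.factorial (n-1) : ℂ)) ≠ 0 := hfac (n-1)
    have hj1 : ((j:ℂ)+1) ≠ 0 := by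
      have : (((j+1:ℕ)):ℂ) ≠ 0 := Nat.cast_ne_zero.mpr (Nat.succ_ne_zero j)
      push_cast at this; exact this
    set P := ((Nat.factorial j : ℂ)) with hPd
    set Q := ((Nat.factorial (n-1) : ℂ)) with hQd
    set R := (1+w)^(2*n+1) with hRd
    set A := ((Nat.factorial (n+j) : ℂ)) with hAd
    set X := (1+w)^(n-1-j) with hXd
    set Y := (z-w)^j with hYd
    set J := (j:ℂ)+1 with hJd
    clear_value P Q R A X Y J
    field_simp
    have hW : J * P ^ 2 * Q ^ 2 * R ^ 2 * J⁻¹ * P⁻¹ ^ 2 * Q⁻¹ ^ 2 * R⁻¹ ^ 2 = 1 := by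
      field_simp
    ring
  have h0 : ((-1:ℂ)^0 * (Nat.choose (n + 0 - 1) 0 : ℂ) *
        ((((-((n:ℤ)+((0:ℕ):ℤ))) : ℤ) : ℂ) * (1+w)^((-((n:ℤ)+((0:ℕ):ℤ))) - 1) * v * (z-w)^0
          + (1+w)^(-((n:ℤ)+((0:ℕ):ℤ))) * ((((0:ℕ)):ℂ) * (z-w)^(0-1) * (-v)))) = - F 0 := by
    have ccoef : (((-((n:ℤ)+((0:ℕ):ℤ))) : ℤ) : ℂ) = -(n:ℂ) := by push_cast; ring
    have e1 : (-((n:ℤ)+((0:ℕ):ℤ))) - 1 = ((n : ℕ) : ℤ) - ((2*n+1 : ℕ) : ℤ) := by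
      push_cast; omega
    rw [ccoef, e1, hzp]
    have hf1 : (Nat.factorial n : ℂ) = (n:ℂ) * (Nat.factorial (n-1) : ℂ) := by
      have h : n = (n-1)+1 := by omega
      nth_rewrite 1 [h]
      rw [Nat.factorial_succ]; push_cast [Nat.cast_sub (by omega : 1 ≤ n)]; ring
    simp only [hF]
    simp only [Nat.choose_zero_right, pow_zero, Nat.sub_zero, Nat.add_zero, Nat.cast_zero,
      Nat.cast_one, CharP.cast_eq_zero, zero_mul, mul_zero, add_zero, one_mul, mul_one]
    rw [hf1]
    have hQ : ((Nat.factorial (n-1) : ℂ)) ≠ 0 := hfac (n-1)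
    set Q := ((Nat.factorial (n-1) : ℂ)) with hQd
    set R := (1+w)^(2*n+1) with hRd
    set X := (1+w)^n with hXd
    clear_value Q R X
    field_simp
    simp
  rw [Finset.sum_range_succ' _ n, h0, Finset.sum_congr rfl step, Finset.sum_range_sub' F n]
  have hFn : F n = (-1:ℂ)^n * (n:ℂ) * ((Nat.factorial (2*n) : ℂ) / ((Nat.factorial n : ℂ))^2) *
        ((z - w)^n / (1+w)^(2*n+1) * v) := by
    simp only [hF]
    have h2n : n + n = 2*n := by omega
    have hnn : n - n = 0 := by omega
    have hf1 : (Nat.factorial n : ℂ) = (n:ℂ) * (Nat.factorial (n-1) : ℂ) := by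
      have h : n = (n-1)+1 := by omega
      nth_rewrite 1 [h]
      rw [Nat.factorial_succ]; push_cast [Nat.cast_sub (by omega : 1 ≤ n)]; ring
    rw [h2n, hnn, hf1]
    have hn0 : (n:ℂ) ≠ 0 := Nat.cast_ne_zero.mpr (by omega)
    have hQ : ((Nat.factorial (n-1) : ℂ)) ≠ 0 := hfac (n-1)
    have hA2 : ((Nat.factorial (2*n) : ℂ)) ≠ 0 := hfac (2*n)
    simp only [pow_zero, one_mul, mul_one]
    set Q := ((Nat.factorial (n-1) : ℂ)) with hQd
    set R := (1+w)^(2*n+1) with hRd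
    set A2 := ((Nat.factorial (2*n) : ℂ)) with hA2d
    set Y := (z-w)^n with hYd
    clear_value Q R A2 Y
    field_simp
  rw [hFn]
  ring

/-- Integral-remainder formula for the n-th Taylor polynomial at 0 of (1+z)^{-n},
valid along any C¹ path from 0 to z avoiding -1. -/
theorem taylor_remainder_one_add_z_pow_neg_n
    (n : ℕ) (z : ℂ) (hz : z ≠ -1)
    (γ : ℝ → ℂ) (hγ0 : γ 0 = 0) (hγ1 : γ 1 = z)
    (hγ : ∀ t ∈ Set.Icc (0:ℝ) 1, γ t ≠ -1)
    (hγC1 : ContDiffOn ℝ 1 γ (Set.Icc (0:ℝ) 1)) :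
    (1 + z) ^ (-(n:ℤ))
      - ∑ k ∈ Finset.range (n+1), (-1:ℂ)^k * (Nat.choose (n + k - 1) k) * z ^ k
    = (-1:ℂ)^(n+1) * n * ((Nat.factorial (2*n) : ℂ) / ((Nat.factorial n : ℂ))^2) *
        ∫ t in (0:ℝ)..1, (z - γ t) ^ n / (1 + γ t) ^ (2*n+1) * deriv γ t := by
  rcases Nat.eq_zero_or_pos n with hn0 | hn
  · subst hn0; simp
  have hn1 : 1 ≤ n := hn
  have key_sum : ∀ w v : ℂ, 1 + w ≠ 0 →
    ∑ k ∈ Finset.range (n+1),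
      ((-1:ℂ)^k * (Nat.choose (n + k - 1) k) *
        ((((-((n:ℤ)+(k:ℕ))) : ℤ) : ℂ) * (1+w)^((-((n:ℤ)+(k:ℕ))) - 1) * v * (z-w)^k
          + (1+w)^(-((n:ℤ)+(k:ℕ))) * (((k:ℕ):ℂ) * (z-w)^(k-1) * (-v))))
    = (-1:ℂ)^(n+1) * (n:ℂ) * ((Nat.factorial (2*n) : ℂ) / ((Nat.factorial n : ℂ))^2) *
        ((z - w)^n / (1+w)^(2*n+1) * v) :=
    fun w v hw => key_sum n hn1 z w v hw
  set G : ℝ → ℂ := fun t => ∑ k ∈ Finset.range (n+1),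
      (-1:ℂ)^k * (Nat.choose (n + k - 1) k) *
        ((1 + γ t) ^ (-((n:ℤ)+(k:ℕ))) * (z - γ t)^k) with hGdef
  have hwne : ∀ t ∈ Set.Icc (0:ℝ) 1, (1:ℂ) + γ t ≠ 0 := by
    intro t ht h
    exact hγ t ht (by linear_combination h)
  have hderivγ : ∀ t ∈ Set.Ioo (0:ℝ) 1, HasDerivAt γ (deriv γ t) t := by
    intro t ht
    have hmem : Set.Icc (0:ℝ) 1 ∈ nhds t := Icc_mem_nhds ht.1 ht.2
    exact ((hγC1.differentiableOn one_ne_zero t (Set.Ioo_subset_Icc_self ht)).differentiableAt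
      hmem).hasDerivAt
  have hdW : ∀ t ∈ Set.Ioo (0:ℝ) 1, derivWithin γ (Set.Icc 0 1) t = deriv γ t := by
    intro t ht; exact derivWithin_of_mem_nhds (Icc_mem_nhds ht.1 ht.2)
  set K : ℂ := (-1:ℂ)^(n+1) * (n:ℂ) * ((Nat.factorial (2*n) : ℂ) / ((Nat.factorial n : ℂ))^2)
    with hKdef
  have hGderiv : ∀ t ∈ Set.Ioo (0:ℝ) 1,
      HasDerivAt G (K * ((z - γ t)^n / (1 + γ t)^(2*n+1) * deriv γ t)) t := by
    intro t ht
    have htIcc : t ∈ Set.Icc (0:ℝ) 1 := Set.Ioo_subset_Icc_self ht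
    have hγd := hderivγ t ht
    have hne : (1:ℂ) + γ t ≠ 0 := hwne t htIcc
    have hterm : ∀ k ∈ Finset.range (n+1), HasDerivAt
        (fun s => (-1:ℂ)^k * (Nat.choose (n + k - 1) k) *
          ((1 + γ s) ^ (-((n:ℤ)+(k:ℕ))) * (z - γ s)^k))
        ((-1:ℂ)^k * (Nat.choose (n + k - 1) k) *
          ((((-((n:ℤ)+(k:ℕ))) : ℤ) : ℂ) * (1 + γ t)^((-((n:ℤ)+(k:ℕ))) - 1) * deriv γ t * (z - γ t)^k
            + (1 + γ t)^(-((n:ℤ)+(k:ℕ))) * (((k:ℕ):ℂ) * (z - γ t)^(k-1) * (-deriv γ t)))) t := by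
      intro k hk
      have h1 : HasDerivAt (fun s => (1:ℂ) + γ s) (deriv γ t) t := hγd.const_add 1
      have h2 : HasDerivAt (fun s => ((1:ℂ) + γ s)^(-((n:ℤ)+(k:ℕ))))
          ((((-((n:ℤ)+(k:ℕ))) : ℤ) : ℂ) * (1 + γ t)^((-((n:ℤ)+(k:ℕ))) - 1) * deriv γ t) t := by
        have := (hasDerivAt_zpow (-((n:ℤ)+(k:ℕ))) ((1:ℂ) + γ t) (Or.inl hne)).scomp t h1
        simpa [Function.comp_def, smul_eq_mul, mul_comm, mul_left_comm, mul_assoc] using this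
      have hsub : HasDerivAt (fun s => z - γ s) (-deriv γ t) t := hγd.const_sub z
      have h3 : HasDerivAt (fun s => (z - γ s)^k)
          (((k:ℕ):ℂ) * (z - γ t)^(k-1) * (-deriv γ t)) t := by
        have := (hasDerivAt_pow k (z - γ t)).scomp t hsub
        simpa [Function.comp_def, smul_eq_mul, mul_comm, mul_left_comm, mul_assoc] using this
      exact (h2.mul h3).const_mul _
    rw [hGdef, hKdef]
    rw [← key_sum (γ t) (deriv γ t) hne]
    exact HasDerivAt.fun_sum hterm
  have hcont : ContinuousOn G (Set.Icc (0:ℝ) 1) := by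
    rw [hGdef]
    refine continuousOn_finset_sum _ (fun k hk => ?_)
    refine continuousOn_const.mul (ContinuousOn.mul ?_ ?_)
    · exact (continuousOn_const.add hγC1.continuousOn).zpow₀ _
        (fun t ht => Or.inl (hwne t ht))
    · exact (continuousOn_const.sub hγC1.continuousOn).pow k
  have hdWcont : ContinuousOn (derivWithin γ (Set.Icc 0 1)) (Set.Icc (0:ℝ) 1) :=
    hγC1.continuousOn_derivWithin (uniqueDiffOn_Icc (by norm_num)) le_rfl
  set g : ℝ → ℂ := fun t =>
      K * ((z - γ t)^n / (1 + γ t)^(2*n+1) * derivWithin γ (Set.Icc 0 1) t) with hgdef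
  have hgcont : ContinuousOn g (Set.Icc (0:ℝ) 1) := by
    rw [hgdef]
    refine continuousOn_const.mul (ContinuousOn.mul (ContinuousOn.div ?_ ?_ ?_) hdWcont)
    · exact (continuousOn_const.sub hγC1.continuousOn).pow n
    · exact (continuousOn_const.add hγC1.continuousOn).pow _
    · exact fun t ht => pow_ne_zero _ (hwne t ht)
  have hgint : IntervalIntegrable g MeasureTheory.volume 0 1 := by
    apply ContinuousOn.intervalIntegrable
    rwa [Set.uIcc_of_le zero_le_one]
  have hftc : ∫ t in (0:ℝ)..1, g t = G 1 - G 0 := by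
    refine intervalIntegral.integral_eq_sub_of_hasDeriv_right_of_le zero_le_one hcont
      (fun t ht => ?_) hgint
    have := hGderiv t ht
    rw [hgdef]
    simp only
    rw [hdW t ht]
    exact this.hasDerivWithinAt
  have hae : ∫ t in (0:ℝ)..1, (z - γ t)^n / (1 + γ t)^(2*n+1) * deriv γ t
      = ∫ t in (0:ℝ)..1, (z - γ t)^n / (1 + γ t)^(2*n+1) * derivWithin γ (Set.Icc 0 1) t := by
    apply intervalIntegral.integral_congr_ae
    have h1 : ∀ᵐ x : ℝ ∂MeasureTheory.volume, x ≠ 1 := by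
      refine (MeasureTheory.ae_iff).mpr ?_
      have : {x : ℝ | ¬ x ≠ 1} = {1} := by ext x; simp
      rw [this]
      exact Real.volume_singleton
    filter_upwards [h1] with x hx hmem
    rw [Set.uIoc_of_le zero_le_one] at hmem
    have hxIoo : x ∈ Set.Ioo (0:ℝ) 1 := ⟨hmem.1, lt_of_le_of_ne hmem.2 hx⟩
    rw [hdW x hxIoo]
  have hG1 : G 1 = (1 + z) ^ (-(n:ℤ)) := by
    rw [hGdef]
    simp only [hγ1]
    rw [Finset.sum_eq_single 0]
    · simp
    · intro k hk hk0
      simp [sub_self, zero_pow hk0]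
    · intro h
      exact absurd (Finset.mem_range.mpr (Nat.succ_pos n)) h
  have hG0 : G 0 = ∑ k ∈ Finset.range (n+1), (-1:ℂ)^k * (Nat.choose (n + k - 1) k) * z ^ k := by
    rw [hGdef]
    simp [hγ0]
  rw [hae, ← intervalIntegral.integral_const_mul]
  rw [← hgdef] at *
  rw [hftc, hG1, hG0]
end

section
/- Let G = {(z₁, z₂) ∈ ℂ² : |z₁ − a₁| < r₁, |z₂ − a₂| < r₂} be a bidisk with r₂ < |a₂|, and let F(z₁, z₂) = (z₂, z₁z₂). Then the image K = F(closure G) is polynomially convex: for every (w₁°, w₂°) ∉ K there exists a holomorphic polynomial Q in two variables with |Q(w₁°, w₂°)| > sup_{K} |Q|. -/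
open Finset

/-- The image K = F(closure G) of the closed bidisk under F(z₁,z₂) = (z₂, z₁z₂)
is polynomially convex: every point outside K is separated from K by a
holomorphic polynomial in two variables. -/
theorem image_bidisk_polynomially_convex
    (a₁ a₂ : ℂ) (r₁ r₂ : ℝ) (hr₁ : 0 < r₁) (hr₂ : 0 < r₂) (h : r₂ < ‖a₂‖)
    (G : Set (ℂ × ℂ))
    (hG : G = {z : ℂ × ℂ | ‖z.1 - a₁‖ < r₁ ∧ ‖z.2 - a₂‖ < r₂})
    (K : Set (ℂ × ℂ)) (hK : K = (fun z : ℂ × ℂ => (z.2, z.1 * z.2)) '' closure G)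
    (w : ℂ × ℂ) (hw : w ∉ K) :
    ∃ Q : MvPolynomial (Fin 2) ℂ,
      sSup ((fun v : ℂ × ℂ => ‖MvPolynomial.eval ![v.1, v.2] Q‖) '' K)
        < ‖MvPolynomial.eval ![w.1, w.2] Q‖ := by
  have ha₂pos : 0 < ‖a₂‖ := lt_trans hr₂ h
  have ha₂ : a₂ ≠ 0 := by
    intro h0; rw [h0] at ha₂pos; simp at ha₂pos
  have hclG : closure G = (Metric.closedBall a₁ r₁) ×ˢ (Metric.closedBall a₂ r₂) := by
    have hGb : G = (Metric.ball a₁ r₁) ×ˢ (Metric.ball a₂ r₂) := by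
      rw [hG]; ext z; simp [Set.mem_prod, Metric.mem_ball, Complex.dist_eq]
    rw [hGb, closure_prod_eq, closure_ball _ hr₁.ne', closure_ball _ hr₂.ne']
  have hKmem : ∀ v, v ∈ K ↔ ∃ z₁ z₂ : ℂ, ‖z₁ - a₁‖ ≤ r₁ ∧
      ‖z₂ - a₂‖ ≤ r₂ ∧ v = (z₂, z₁ * z₂) := by
    intro v
    rw [hK, hclG]
    constructor
    · rintro ⟨z, ⟨hz1, hz2⟩, rfl⟩
      exact ⟨z.1, z.2, by simpa [Complex.dist_eq] using hz1,
        by simpa [Complex.dist_eq] using hz2, rfl⟩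
    · rintro ⟨z₁, z₂, h1, h2, rfl⟩
      exact ⟨(z₁, z₂), ⟨by simpa [Complex.dist_eq] using h1,
        by simpa [Complex.dist_eq] using h2⟩, rfl⟩
  have hKne : K.Nonempty :=
    ⟨(a₂, a₁ * a₂), (hKmem _).2 ⟨a₁, a₂, by simp [hr₁.le], by simp [hr₂.le], rfl⟩⟩
  by_cases h1 : ‖w.1 - a₂‖ ≤ r₂
  · -- hard case: |w₁ - a₂| ≤ r₂
    have hw1pos : 0 < ‖w.1‖ := by
      have h2 : ‖a₂‖ - ‖w.1‖ ≤ ‖a₂ - w.1‖ := by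
        simpa using norm_sub_norm_le a₂ w.1
      have h3 : ‖a₂ - w.1‖ = ‖w.1 - a₂‖ := by
        exact norm_sub_rev _ _
      linarith
    have hw1ne : w.1 ≠ 0 := by
      intro h0; rw [h0] at hw1pos; simp at hw1pos
    set c : ℂ := w.2 / w.1 - a₁ with hc_def
    have hc : r₁ < ‖c‖ := by
      by_contra hcon
      push_neg at hcon
      exact hw ((hKmem w).2 ⟨w.2 / w.1, w.1, hcon, h1,
        by rw [div_mul_cancel₀ _ hw1ne]⟩)
    set ρ : ℝ := r₂ / ‖a₂‖ with hρ_def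
    have hρ0 : 0 ≤ ρ := div_nonneg hr₂.le ha₂pos.le
    have hρ1 : ρ < 1 := (div_lt_one ha₂pos).2 h
    have htarget : 0 < (‖c‖ - r₁) / (‖c‖ + r₁) :=
      div_pos (by linarith) (by linarith)
    obtain ⟨m, hm⟩ := exists_pow_lt_of_lt_one htarget hρ1
    set ε : ℝ := ρ ^ m with hε_def
    have hε0 : 0 ≤ ε := pow_nonneg hρ0 m
    have hε1 : ε ≤ 1 := pow_le_one₀ hρ0 hρ1.le
    have hkey : r₁ * (1 + ε) < ‖c‖ * (1 - ε) := by
      have h4 : ε * (‖c‖ + r₁) < ‖c‖ - r₁ :=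
        (lt_div_iff₀ (by linarith)).mp hm
      nlinarith
    set S : MvPolynomial (Fin 2) ℂ :=
      ∑ k ∈ range m, (MvPolynomial.C a₂⁻¹ * (MvPolynomial.C a₂ - MvPolynomial.X 0)) ^ k
      with hS_def
    refine ⟨(MvPolynomial.X 1 - MvPolynomial.C a₁ * MvPolynomial.X 0) *
      (MvPolynomial.C a₂⁻¹ * S), ?_⟩
    have heval : ∀ u v : ℂ,
        MvPolynomial.eval ![u, v]
          ((MvPolynomial.X 1 - MvPolynomial.C a₁ * MvPolynomial.X 0) *
            (MvPolynomial.C a₂⁻¹ * S)) =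
        (v - a₁ * u) * (a₂⁻¹ * ∑ k ∈ range m, (a₂⁻¹ * (a₂ - u)) ^ k) := by
      intro u v
      simp [hS_def, map_sum]
    have hid : ∀ u : ℂ,
        u * (a₂⁻¹ * ∑ k ∈ range m, (a₂⁻¹ * (a₂ - u)) ^ k)
          = 1 - (a₂⁻¹ * (a₂ - u)) ^ m := by
      intro u
      have hg := geom_sum_mul (a₂⁻¹ * (a₂ - u)) m
      have hu : u * a₂⁻¹ = 1 - a₂⁻¹ * (a₂ - u) := by
        field_simp; ring
      calc u * (a₂⁻¹ * ∑ k ∈ range m, (a₂⁻¹ * (a₂ - u)) ^ k)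
          = (u * a₂⁻¹) * ∑ k ∈ range m, (a₂⁻¹ * (a₂ - u)) ^ k := by ring
        _ = (1 - a₂⁻¹ * (a₂ - u)) * ∑ k ∈ range m, (a₂⁻¹ * (a₂ - u)) ^ k := by rw [hu]
        _ = 1 - (a₂⁻¹ * (a₂ - u)) ^ m := by linear_combination (-1 : ℂ) * hg
    have ht : ∀ u : ℂ, ‖u - a₂‖ ≤ r₂ →
        ‖a₂⁻¹ * (a₂ - u)‖ ≤ ρ := by
      intro u hu
      have h5 : ‖a₂ - u‖ = ‖u - a₂‖ := by
        exact norm_sub_rev _ _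
      rw [norm_mul, norm_inv, hρ_def]
      rw [inv_mul_eq_div, div_le_div_iff₀ ha₂pos ha₂pos]
      nlinarith
    have habs_sub_le : ∀ y : ℂ, ‖1 - y‖ ≤ 1 + ‖y‖ := by
      intro y
      simpa using norm_sub_le (1 : ℂ) y
    have habs_sub_ge : ∀ y : ℂ, 1 - ‖y‖ ≤ ‖1 - y‖ := by
      intro y
      simpa using norm_sub_norm_le (1 : ℂ) y
    refine lt_of_le_of_lt (csSup_le (hKne.image _) ?_) (lt_of_lt_of_le hkey ?_)
    · rintro x ⟨v, hv, rfl⟩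
      obtain ⟨z₁, z₂, hz1, hz2, rfl⟩ := (hKmem v).1 hv
      simp only [heval]
      have hfe : ((z₁ * z₂ : ℂ) - a₁ * z₂) *
          (a₂⁻¹ * ∑ k ∈ range m, (a₂⁻¹ * (a₂ - z₂)) ^ k)
          = (z₁ - a₁) * (1 - (a₂⁻¹ * (a₂ - z₂)) ^ m) := by
        calc ((z₁ * z₂ : ℂ) - a₁ * z₂) * (a₂⁻¹ * ∑ k ∈ range m, (a₂⁻¹ * (a₂ - z₂)) ^ k)
            = (z₁ - a₁) * (z₂ * (a₂⁻¹ * ∑ k ∈ range m, (a₂⁻¹ * (a₂ - z₂)) ^ k)) := by ring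
          _ = (z₁ - a₁) * (1 - (a₂⁻¹ * (a₂ - z₂)) ^ m) := by rw [hid z₂]
      rw [hfe, norm_mul]
      have hb1 : ‖1 - (a₂⁻¹ * (a₂ - z₂)) ^ m‖ ≤ 1 + ε := by
        refine le_trans (habs_sub_le _) ?_
        have := pow_le_pow_left₀ (norm_nonneg _) (ht z₂ hz2) m
        rw [norm_pow]
        linarith
      exact mul_le_mul hz1 hb1 (norm_nonneg _) hr₁.le
    · rw [heval w.1 w.2]
      have hfw : (w.2 - a₁ * w.1) * (a₂⁻¹ * ∑ k ∈ range m, (a₂⁻¹ * (a₂ - w.1)) ^ k)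
          = c * (1 - (a₂⁻¹ * (a₂ - w.1)) ^ m) := by
        have hw2 : w.2 - a₁ * w.1 = c * w.1 := by
          rw [hc_def]; field_simp
        calc (w.2 - a₁ * w.1) * (a₂⁻¹ * ∑ k ∈ range m, (a₂⁻¹ * (a₂ - w.1)) ^ k)
            = c * (w.1 * (a₂⁻¹ * ∑ k ∈ range m, (a₂⁻¹ * (a₂ - w.1)) ^ k)) := by
              rw [hw2]; ring
          _ = c * (1 - (a₂⁻¹ * (a₂ - w.1)) ^ m) := by rw [hid w.1]
      rw [hfw, norm_mul]
      have hb2 : 1 - ε ≤ ‖1 - (a₂⁻¹ * (a₂ - w.1)) ^ m‖ := by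
        refine le_trans ?_ (habs_sub_ge _)
        have := pow_le_pow_left₀ (norm_nonneg _) (ht w.1 h1) m
        rw [norm_pow]
        linarith
      exact mul_le_mul_of_nonneg_left hb2 (norm_nonneg c)
  · -- easy case
    push_neg at h1
    refine ⟨MvPolynomial.X 0 - MvPolynomial.C a₂, ?_⟩
    have heval : ∀ u v : ℂ,
        MvPolynomial.eval ![u, v]
          (MvPolynomial.X 0 - MvPolynomial.C a₂ : MvPolynomial (Fin 2) ℂ) = u - a₂ := by
      intro u v; simp
    refine lt_of_le_of_lt (b := r₂) (csSup_le (hKne.image _) ?_) ?_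
    · rintro x ⟨v, hv, rfl⟩
      obtain ⟨z₁, z₂, _, hz2, rfl⟩ := (hKmem v).1 hv
      simp only [heval]
      simpa using hz2
    · rw [heval w.1 w.2]; exact h1
end

section
/- Let a₂ > 0 and 0 < r₂ < a₂, a₁ ∈ ℂ, r₁ > 0, and K as above. Fix (w₁°, w₂°) with |w₁° − a₂| ≤ r₂ and |w₂°/w₁° − a₁| = (1+δ)r₁ for some δ > 0. Then for any polynomial p(w₁) with sup_{|w₁−a₂|≤r₂} |p(w₁) − 1/w₁| < ε where ε < δ r₁ / (|w₂°| + (|a₂|+r₂)(|a₁|+r₁)), the polynomial Q(w₁,w₂) = w₂ p(w₁) − a₁ satisfies |Q(w₁°, w₂°)| > sup_K |Q|. -/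
/-- Separation of a point with |w₂°/w₁° - a₁| = (1+δ)r₁ from
K = {(w₁,w₂) : |w₁ - a₂| ≤ r₂, |w₂/w₁ - a₁| ≤ r₁} by the polynomial
Q(w₁,w₂) = w₂ p(w₁) - a₁, where p approximates 1/w₁ within ε on the disk. -/
theorem separation_by_Q
    (a₁ : ℂ) (a₂ r₁ r₂ δ ε : ℝ)
    (ha₂ : 0 < a₂) (hr₂ : 0 < r₂) (hr₂a : r₂ < a₂) (hr₁ : 0 < r₁) (hδ : 0 < δ)
    (K : Set (ℂ × ℂ))
    (hK : K = {w : ℂ × ℂ | ‖w.1 - (a₂:ℂ)‖ ≤ r₂ ∧ ‖w.2 / w.1 - a₁‖ ≤ r₁})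
    (w₁ w₂ : ℂ)
    (hw₁ : ‖w₁ - (a₂:ℂ)‖ ≤ r₂)
    (hw₂ : ‖w₂ / w₁ - a₁‖ = (1 + δ) * r₁)
    (p : Polynomial ℂ)
    (hp : ∀ u : ℂ, ‖u - (a₂:ℂ)‖ ≤ r₂ → ‖p.eval u - 1 / u‖ < ε)
    (hε : ε < δ * r₁ / (‖w₂‖ + (a₂ + r₂) * (‖a₁‖ + r₁))) :
    sSup ((fun v : ℂ × ℂ => ‖v.2 * p.eval v.1 - a₁‖) '' K)
      < ‖w₂ * p.eval w₁ - a₁‖ := by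
  subst hK
  set C : ℝ := (a₂ + r₂) * (‖a₁‖ + r₁) with hCdef
  have hεpos : 0 < ε := by
    have := hp a₂ (by simp [hr₂.le])
    exact lt_of_le_of_lt (norm_nonneg _) this
  have hC : 0 < C := mul_pos (by linarith) (by positivity)
  have hD : 0 < ‖w₂‖ + C := by positivity
  have hεD : ε * (‖w₂‖ + C) < δ * r₁ := by
    rw [← lt_div_iff₀ hD]; exact hε
  -- upper bound on K
  have key : ∀ v : ℂ × ℂ, ‖v.1 - (a₂:ℂ)‖ ≤ r₂ →
      ‖v.2 / v.1 - a₁‖ ≤ r₁ →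
      ‖v.2 * p.eval v.1 - a₁‖ ≤ r₁ + C * ε := by
    intro v h1 h2
    have hne : v.1 ≠ 0 := by
      intro h
      rw [h] at h1
      simp only [zero_sub, norm_neg, Complex.norm_real, Real.norm_eq_abs, abs_of_pos ha₂] at h1
      linarith
    have habs1 : ‖v.1‖ ≤ a₂ + r₂ := by
      have : ‖v.1‖ ≤ ‖v.1 - (a₂:ℂ)‖ + ‖(a₂:ℂ)‖ := by
        simpa using norm_add_le (v.1 - a₂) a₂
      rw [Complex.norm_real, Real.norm_eq_abs, abs_of_pos ha₂] at this
      linarith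
    have habs2 : ‖v.2 / v.1‖ ≤ ‖a₁‖ + r₁ := by
      have : ‖v.2 / v.1‖ ≤ ‖v.2 / v.1 - a₁‖ + ‖a₁‖ := by
        simpa using norm_add_le (v.2 / v.1 - a₁) a₁
      linarith
    have habs3 : ‖v.2‖ ≤ C := by
      have hv2 : ‖v.2‖ = ‖v.2 / v.1‖ * ‖v.1‖ := by
        rw [norm_div, div_mul_cancel₀ _ (norm_ne_zero_iff.mpr hne)]
      rw [hv2, hCdef]
      calc ‖v.2 / v.1‖ * ‖v.1‖
          ≤ (‖a₁‖ + r₁) * (a₂ + r₂) :=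
            mul_le_mul habs2 habs1 (norm_nonneg _) (by positivity)
        _ = (a₂ + r₂) * (‖a₁‖ + r₁) := by ring
    have heq : v.2 * p.eval v.1 - a₁ = (v.2 / v.1 - a₁) + v.2 * (p.eval v.1 - 1 / v.1) := by
      field_simp
      ring
    rw [heq]
    calc ‖(v.2 / v.1 - a₁) + v.2 * (p.eval v.1 - 1 / v.1)‖
        ≤ ‖v.2 / v.1 - a₁‖ + ‖v.2 * (p.eval v.1 - 1 / v.1)‖ :=
          norm_add_le _ _
      _ ≤ r₁ + C * ε := by
          rw [norm_mul]
          have := mul_le_mul habs3 (hp v.1 h1).le (norm_nonneg _) hC.le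
          linarith
  have hub : sSup ((fun v : ℂ × ℂ => ‖v.2 * p.eval v.1 - a₁‖) ''
      {w : ℂ × ℂ | ‖w.1 - (a₂:ℂ)‖ ≤ r₂ ∧ ‖w.2 / w.1 - a₁‖ ≤ r₁})
      ≤ r₁ + C * ε := by
    apply Real.sSup_le
    · rintro x ⟨v, hv, rfl⟩
      exact key v hv.1 hv.2
    · positivity
  -- lower bound at the point
  have hne : w₁ ≠ 0 := by
    intro h
    rw [h] at hw₁
    simp only [zero_sub, norm_neg, Complex.norm_real, Real.norm_eq_abs, abs_of_pos ha₂] at hw₁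
    linarith
  have heq : w₂ / w₁ - a₁ = (w₂ * p.eval w₁ - a₁) + (-(w₂ * (p.eval w₁ - 1 / w₁))) := by
    field_simp
    ring
  have hlb : (1 + δ) * r₁ - ‖w₂‖ * ε ≤ ‖w₂ * p.eval w₁ - a₁‖ := by
    have h1 : ‖w₂ / w₁ - a₁‖
        ≤ ‖w₂ * p.eval w₁ - a₁‖ + ‖w₂ * (p.eval w₁ - 1 / w₁)‖ := by
      rw [heq]
      simpa using norm_add_le (w₂ * p.eval w₁ - a₁) (-(w₂ * (p.eval w₁ - 1 / w₁)))
    have h2 : ‖w₂ * (p.eval w₁ - 1 / w₁)‖ ≤ ‖w₂‖ * ε := by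
      rw [norm_mul]
      exact mul_le_mul_of_nonneg_left (hp w₁ hw₁).le (norm_nonneg _)
    rw [hw₂] at h1
    linarith
  have : r₁ + C * ε < (1 + δ) * r₁ - ‖w₂‖ * ε := by nlinarith
  linarith
end
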